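/- Temporal dynamical systems are timed: if (S,g) is a dynamical system with g injective, then (S,g) admits a timing map (i.e., (S,g) is timed). -/

import Mathlib

/-- A timing map on a dynamical system `(S, g)`: it assigns `0` to every initial state (a state
not in the range of `g`), and satisfies `τ(g(s)) = τ(s) + 1` (with `∞ + 1 = ∞`). -/
def IsTimingMap {S : Type} (g : S → S) (τ : S → ℕ∞) : Prop :=
  (∀ s, (∀ w, g w ≠ s) → τ s = 0) ∧ ∀ s, τ (g s) = τ s + 1

/-- **Temporal dynamical systems are timed**: if the dynamical map `g` is injective, then the
dynamical system `(S, g)` admits a timing map. -/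
theorem temporal_implies_timed {S : Type} (g : S → S) (hg : Function.Injective g) :
    ∃ τ : S → ℕ∞, IsTimingMap g τ := by
  set P : S → ℕ → Prop := fun s n => ∃ w, g^[n] w = s with hP
  refine ⟨fun s => ⨆ n, ⨆ _ : P s n, (n : ℕ∞), ?_, ?_⟩
  · intro s hs
    refine le_antisymm (iSup₂_le fun n hn => ?_) zero_le
    match n, hn with
    | 0, _ => exact le_refl 0
    | (n+1), ⟨w, hw⟩ =>
      rw [Function.iterate_succ_apply'] at hw
      exact absurd hw (hs _)
  · intro s
    rw [ENat.biSup_add' (p := P s) ⟨0, s, rfl⟩]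
    refine le_antisymm (iSup₂_le fun m hm => ?_) (iSup₂_le fun n hn => ?_)
    · match m, hm with
      | 0, _ =>
        calc (0 : ℕ∞) ≤ (0 : ℕ) + 1 := by norm_num
          _ ≤ _ := le_iSup₂ (f := fun n (_ : P s n) => (n : ℕ∞) + 1) 0 ⟨s, rfl⟩
      | (m+1), ⟨w, hw⟩ =>
        rw [Function.iterate_succ_apply'] at hw
        have : P s m := ⟨w, hg hw⟩
        have := le_iSup₂ (f := fun n (_ : P s n) => (n : ℕ∞) + 1) m this
        calc ((m + 1 : ℕ) : ℕ∞) = (m : ℕ∞) + 1 := by push_cast; ring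
          _ ≤ _ := this
    · obtain ⟨w, hw⟩ := hn
      have : P (g s) (n + 1) := ⟨w, by rw [Function.iterate_succ_apply', hw]⟩
      have := le_iSup₂ (f := fun m (_ : P (g s) m) => (m : ℕ∞)) (n + 1) this
      calc (n : ℕ∞) + 1 = ((n + 1 : ℕ) : ℕ∞) := by push_cast; ring
        _ ≤ _ := this
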